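/- Let d ≥ 3, q ≥ 2, and l_1 = 0, l_2, …, l_{d−1} ∈ ℤ_q with l_i − l_j a unit whenever i ≠ j. Let ℤ^{d−1} act on R_d(ℤ_q) with v acting by multiplication by ∏_i(t+l_i)^{v_i}. Then every derivation is principal: for every map δ : ℤ^{d−1} → R_d(ℤ_q) satisfying δ(v + w) = δ(v) + (∏_i(t+l_i)^{v_i})·δ(w) for all v, w ∈ ℤ^{d−1}, there exists A ∈ R_d(ℤ_q) such that δ(v) = (∏_i(t+l_i)^{v_i})·A − A for all v ∈ ℤ^{d−1}. Equivalently, the first group cohomology H^1(ℤ^{d−1}, R_d(ℤ_q)) with this module structure vanishes. -/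

import Mathlib

open Polynomial

/-- The multiplicative set of `ℤ_q[t]` generated by the polynomials `t + l i`. -/
noncomputable def dlSub (q d : ℕ) (l : Fin (d-1) → ZMod q) : Submonoid (Polynomial (ZMod q)) :=
  Submonoid.closure {p | ∃ i : Fin (d-1), p = X + C (l i)}

/-- The ring `R_d(ℤ_q) = ℤ_q[t, (t+l_1)⁻¹, …, (t+l_{d-1})⁻¹]`, realized as the localization of
`ℤ_q[t]` at the multiplicative set generated by the `t + l i`. -/
abbrev Rd (q d : ℕ) (l : Fin (d-1) → ZMod q) := Localization (dlSub q d l)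

/-- The image of `t + l i` in `R_d(ℤ_q)`, as a unit. -/
noncomputable def tU (q d : ℕ) (l : Fin (d-1) → ZMod q) (i : Fin (d-1)) : (Rd q d l)ˣ :=
  (IsLocalization.map_units (M := dlSub q d l) (Rd q d l)
    ⟨X + C (l i), Submonoid.subset_closure ⟨i, rfl⟩⟩).unit

/-- The monomial `∏ i (t + l i) ^ (v i)`, as a unit of `R_d(ℤ_q)`. -/
noncomputable def monU (q d : ℕ) (l : Fin (d-1) → ZMod q) (v : Fin (d-1) → ℤ) : (Rd q d l)ˣ :=
  ∏ i, tU q d l i ^ (v i)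

/-- Every derivation `δ : ℤ^(d-1) → R_d(ℤ_q)` (with `v` acting on `R_d(ℤ_q)` by
multiplication by `∏ i (t+l_i)^(v i)`) is principal, i.e. of the form
`δ(v) = (∏ i (t+l_i)^(v i))·A - A` for some `A ∈ R_d(ℤ_q)`; equivalently
`H¹(ℤ^(d-1), R_d(ℤ_q)) = 0` when `d ≥ 3`. -/
theorem statement12 (q d : ℕ) (hq : 2 ≤ q) (hd : 3 ≤ d) (l : Fin (d-1) → ZMod q)
    (hl0 : l ⟨0, by omega⟩ = 0)
    (hl : ∀ i j : Fin (d-1), i ≠ j → IsUnit (l i - l j))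
    (δ : (Fin (d-1) → ℤ) → Rd q d l)
    (hδ : ∀ v w : Fin (d-1) → ℤ,
      δ (v + w) = δ v + (monU q d l v : Rd q d l) * δ w) :
    ∃ A : Rd q d l, ∀ v : Fin (d-1) → ℤ,
      δ v = (monU q d l v : Rd q d l) * A - A := by
  classical
  have hmul : ∀ v w : Fin (d-1) → ℤ,
      monU q d l (v + w) = monU q d l v * monU q d l w := by
    intro v w
    simp only [monU, Pi.add_apply, zpow_add, Finset.prod_mul_distrib]
  have hone : monU q d l 0 = 1 := by simp [monU]
  have hδ0 : δ 0 = 0 := by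
    have h := hδ 0 0
    rw [add_zero, hone, Units.val_one, one_mul] at h
    exact left_eq_add.mp h
  set i0 : Fin (d-1) := ⟨0, by omega⟩ with hi0
  set i1 : Fin (d-1) := ⟨1, by omega⟩ with hi1
  set e : Fin (d-1) → (Fin (d-1) → ℤ) := fun i => Pi.single i 1 with he
  have hmonE : ∀ i, monU q d l (e i) = tU q d l i := by
    intro i
    rw [monU, Finset.prod_eq_single i]
    · simp [he]
    · intro j _ hj
      simp [he, Pi.single_eq_of_ne hj]
    · simp
  have htu : ∀ i, (tU q d l i : Rd q d l)
      = algebraMap (Polynomial (ZMod q)) (Rd q d l) (X + C (l i)) := fun i => rfl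
  -- cocycle commutation on generators
  have hc : ∀ i j, ((tU q d l i : Rd q d l) - 1) * δ (e j)
      = ((tU q d l j : Rd q d l) - 1) * δ (e i) := by
    intro i j
    have h1 := hδ (e i) (e j)
    have h2 := hδ (e j) (e i)
    rw [add_comm (e j) (e i)] at h2
    have h := h1.symm.trans h2
    rw [hmonE i, hmonE j] at h
    linear_combination h
  have hl0' : l i0 = 0 := hl0
  have hu : IsUnit (l i1) := by
    have := hl i1 i0 (by simp [hi0, hi1, Fin.ext_iff])
    rwa [hl0', sub_zero] at this
  set f : ZMod q →+* Rd q d l := (algebraMap (Polynomial (ZMod q)) (Rd q d l)).comp C with hf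
  have hcu : IsUnit (f (l i1)) := hu.map f
  set cu : (Rd q d l)ˣ := hcu.unit with hcudef
  have hcuval : (cu : Rd q d l) = f (l i1) := hcu.unit_spec
  have hdiff : (tU q d l i1 : Rd q d l) - (tU q d l i0 : Rd q d l) = (cu : Rd q d l) := by
    rw [htu, htu, hcuval, hf]
    simp only [RingHom.comp_apply]
    rw [← map_sub]
    congr 1
    rw [hl0', map_zero]
    ring
  set A : Rd q d l := (↑cu⁻¹ : Rd q d l) * (δ (e i1) - δ (e i0)) with hA
  have hinv : (↑cu⁻¹ : Rd q d l) * (cu : Rd q d l) = 1 := Units.inv_mul cu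
  have hgen : ∀ i, δ (e i) = (tU q d l i : Rd q d l) * A - A := by
    intro i
    have h1 := hc i i1
    have h0 := hc i i0
    have key : ((tU q d l i : Rd q d l) - 1) * A = δ (e i) := by
      rw [hA]
      linear_combination (↑cu⁻¹ : Rd q d l) * h1 - (↑cu⁻¹ : Rd q d l) * h0
        + (↑cu⁻¹ : Rd q d l) * δ (e i) * hdiff + δ (e i) * hinv
    linear_combination -key
  -- subgroup of v with the desired property
  set H : AddSubgroup (Fin (d-1) → ℤ) :=
  { carrier := {v | δ v = (monU q d l v : Rd q d l) * A - A}
    zero_mem' := by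
      simp only [Set.mem_setOf_eq, hδ0, hone, Units.val_one]
      ring
    add_mem' := by
      intro v w hv hw
      simp only [Set.mem_setOf_eq] at hv hw ⊢
      rw [hδ v w, hv, hw, hmul, Units.val_mul]
      ring
    neg_mem' := by
      intro v hv
      simp only [Set.mem_setOf_eq] at hv ⊢
      have h := hδ v (-v)
      rw [add_neg_cancel, hδ0] at h
      have hmv : monU q d l (-v) = (monU q d l v)⁻¹ := by
        have h2 := hmul v (-v)
        rw [add_neg_cancel, hone] at h2
        exact eq_inv_of_mul_eq_one_right h2.symm
      rw [hmv]
      have im : (↑(monU q d l v)⁻¹ : Rd q d l) * (↑(monU q d l v) : Rd q d l) = 1 :=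
        Units.inv_mul _
      linear_combination (↑(monU q d l v)⁻¹ : Rd q d l) * h.symm
        - (↑(monU q d l v)⁻¹ : Rd q d l) * hv - (δ (-v) + A) * im } with hH
  have hEi : ∀ i, e i ∈ H := by
    intro i
    show δ (e i) = (monU q d l (e i) : Rd q d l) * A - A
    rw [hmonE i]
    exact hgen i
  refine ⟨A, fun v => ?_⟩
  have hv : v ∈ H := by
    have hvsum : v = ∑ i, v i • e i := by
      funext j
      simp [he, Finset.sum_apply, Pi.single_apply]
    rw [hvsum]
    exact AddSubgroup.sum_mem _ (fun i _ => AddSubgroup.zsmul_mem _ (hEi i) _)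
  exact hv
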